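/- Let X be a set, R : X → X a map such that every point of X has exactly d_m preimages under R^m and exactly d_n preimages under R^n, and let f be a bounded function on X_{m,n} = {(x,y) : R^m(x) = R^n(y)}. Then there is a unique bounded operator α on ℓ²(X) whose (x,y)-entry equals f(x,y) for (x,y) ∈ X_{m,n} and 0 otherwise, and sup|f| ≤ ‖α‖ ≤ max(d_m, d_n) · sup|f|. -/

import Mathlib

open scoped ENNReal


noncomputable section
variable {X : Type*} [DecidableEq X]

/-- Standard basis vector of ℓ²(X). -/
def basisVec (x : X) : lp (fun _ : X => ℂ) 2 := lp.single 2 x 1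

/-- The (x,y)-entry of a bounded operator on ℓ²(X). -/
def entry (α : lp (fun _ : X => ℂ) 2 →L[ℂ] lp (fun _ : X => ℂ) 2) (x y : X) : ℂ :=
  inner ℂ (basisVec x) (α (basisVec y))

/-- If every point has exactly `dm` preimages under `R^m` and `dn` preimages under `R^n`, and
`f` is a bounded function on `X_{m,n}`, then there is a unique bounded operator on `ℓ²(X)`
whose `(x,y)`-entry is `f (x,y)` for `(x,y) ∈ X_{m,n}` and `0` otherwise, and its norm lies
between `sup |f|` and `max dm dn * sup |f|`. -/
theorem stmt14 (R : X → X) (m n dm dn : ℕ)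
    (hm : ∀ z : X, {x : X | R^[m] x = z}.Finite ∧ {x : X | R^[m] x = z}.ncard = dm)
    (hn : ∀ z : X, {x : X | R^[n] x = z}.Finite ∧ {x : X | R^[n] x = z}.ncard = dn)
    (f : X × X → ℂ)
    (hbdd : BddAbove {r : ℝ | ∃ p : X × X, R^[m] p.1 = R^[n] p.2 ∧ r = ‖f p‖}) :
    ∃ α : lp (fun _ : X => ℂ) 2 →L[ℂ] lp (fun _ : X => ℂ) 2,
      (∀ x y : X, entry α x y = if R^[m] x = R^[n] y then f (x, y) else 0) ∧
      (∀ β : lp (fun _ : X => ℂ) 2 →L[ℂ] lp (fun _ : X => ℂ) 2,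
        (∀ x y : X, entry β x y = if R^[m] x = R^[n] y then f (x, y) else 0) → β = α) ∧
      sSup {r : ℝ | ∃ p : X × X, R^[m] p.1 = R^[n] p.2 ∧ r = ‖f p‖} ≤ ‖α‖ ∧
      ‖α‖ ≤ (max dm dn : ℕ) *
        sSup {r : ℝ | ∃ p : X × X, R^[m] p.1 = R^[n] p.2 ∧ r = ‖f p‖} := by
  classical
  set s := sSup {r : ℝ | ∃ p : X × X, R^[m] p.1 = R^[n] p.2 ∧ r = ‖f p‖} with hsdef
  have hs0 : 0 ≤ s := Real.sSup_nonneg (by rintro r ⟨p, _, rfl⟩; positivity)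
  have hfs : ∀ x y : X, R^[m] x = R^[n] y → ‖f (x, y)‖ ≤ s := fun x y h =>
    le_csSup hbdd ⟨(x, y), h, rfl⟩
  set k : X → X → ℂ := fun x y => if R^[m] x = R^[n] y then f (x, y) else 0 with hk
  have hks : ∀ x y, ‖k x y‖ ≤ s := by
    intro x y; simp only [hk]; split_ifs with h
    · exact hfs x y h
    · simpa using hs0
  have hp2 : (0:ℝ) < (2:ℝ≥0∞).toReal := by norm_num
  have hrp : ∀ r : ℝ, 0 ≤ r → r ^ (2:ℝ≥0∞).toReal = r ^ 2 := by
    intro r hr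
    rw [show (2:ℝ≥0∞).toReal = ((2:ℕ):ℝ) by norm_num, Real.rpow_natCast]
  set Tn : X → Finset X := fun x => (hn (R^[m] x)).1.toFinset with hTn
  have hTnmem : ∀ x y, y ∈ Tn x ↔ R^[n] y = R^[m] x := by
    intro x y; simp [hTn, Set.Finite.mem_toFinset]
  have hTncard : ∀ x, (Tn x).card = dn := by
    intro x
    rw [hTn, ← Set.ncard_eq_toFinset_card _ (hn _).1]
    exact (hn _).2
  have hknot : ∀ x y, y ∉ Tn x → k x y = 0 := by
    intro x y h
    rw [hTnmem] at h
    simp only [hk]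
    rw [if_neg (fun hc => h hc.symm)]
  set T : (lp (fun _ : X => ℂ) 2) → X → ℂ := fun g x => ∑ y ∈ Tn x, k x y * g y with hT
  -- pointwise bound
  have hpt : ∀ (g : lp (fun _ : X => ℂ) 2) (x : X),
      ‖T g x‖ ^ 2 ≤ (dn * s ^ 2) * ∑ y ∈ Tn x, ‖g y‖ ^ 2 := by
    intro g x
    have h1 : ‖T g x‖ ≤ ∑ y ∈ Tn x, ‖k x y‖ * ‖g y‖ := by
      refine (norm_sum_le _ _).trans_eq ?_
      exact Finset.sum_congr rfl fun y _ => norm_mul _ _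
    have h2 : ‖T g x‖ ^ 2 ≤ (∑ y ∈ Tn x, ‖k x y‖ * ‖g y‖) ^ 2 := by
      apply pow_le_pow_left₀ (norm_nonneg _) h1
    refine h2.trans ?_
    refine (Finset.sum_mul_sq_le_sq_mul_sq _ _ _).trans ?_
    have h3 : ∑ y ∈ Tn x, ‖k x y‖ ^ 2 ≤ (dn : ℝ) * s ^ 2 := by
      calc ∑ y ∈ Tn x, ‖k x y‖ ^ 2 ≤ ∑ _y ∈ Tn x, s ^ 2 :=
            Finset.sum_le_sum fun y _ => pow_le_pow_left₀ (norm_nonneg _) (hks x y) 2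
        _ = (dn : ℝ) * s ^ 2 := by rw [Finset.sum_const, hTncard, nsmul_eq_mul]
    have h4 : (0:ℝ) ≤ ∑ y ∈ Tn x, ‖g y‖ ^ 2 :=
      Finset.sum_nonneg fun y _ => sq_nonneg _
    exact mul_le_mul_of_nonneg_right h3 h4
  -- column count
  have hcol : ∀ (F : Finset X) (y : X), ((F.filter (fun x => y ∈ Tn x)).card : ℝ) ≤ dm := by
    intro F y
    have hsub : F.filter (fun x => y ∈ Tn x) ⊆ (hm (R^[n] y)).1.toFinset := by
      intro x hx
      rw [Finset.mem_filter] at hx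
      rw [Set.Finite.mem_toFinset]
      exact ((hTnmem x y).1 hx.2).symm
    have := Finset.card_le_card hsub
    have hcard : ((hm (R^[n] y)).1.toFinset).card = dm := by
      rw [← Set.ncard_eq_toFinset_card _ (hm _).1]; exact (hm _).2
    exact_mod_cast hcard ▸ this
  -- partial double-sum bound
  have hdouble : ∀ (g : lp (fun _ : X => ℂ) 2) (F : Finset X),
      ∑ x ∈ F, ∑ y ∈ Tn x, ‖g y‖ ^ 2 ≤ (dm : ℝ) * ‖g‖ ^ 2 := by
    intro g F
    set G := F.biUnion Tn with hG
    have step1 : ∀ x ∈ F, ∑ y ∈ Tn x, ‖g y‖ ^ 2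
        = ∑ y ∈ G, if y ∈ Tn x then ‖g y‖ ^ 2 else 0 := by
      intro x hx
      rw [← Finset.sum_filter]
      apply Finset.sum_congr _ fun _ _ => rfl
      rw [Finset.filter_mem_eq_inter, Finset.inter_eq_right.2 (Finset.subset_biUnion_of_mem Tn hx)]
    calc ∑ x ∈ F, ∑ y ∈ Tn x, ‖g y‖ ^ 2
        = ∑ x ∈ F, ∑ y ∈ G, if y ∈ Tn x then ‖g y‖ ^ 2 else 0 := Finset.sum_congr rfl step1
      _ = ∑ y ∈ G, ∑ x ∈ F, if y ∈ Tn x then ‖g y‖ ^ 2 else 0 := Finset.sum_comm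
      _ = ∑ y ∈ G, ((F.filter (fun x => y ∈ Tn x)).card : ℝ) * ‖g y‖ ^ 2 := by
          refine Finset.sum_congr rfl fun y _ => ?_
          rw [← Finset.sum_filter, Finset.sum_const, nsmul_eq_mul]
      _ ≤ ∑ y ∈ G, (dm : ℝ) * ‖g y‖ ^ 2 :=
          Finset.sum_le_sum fun y _ =>
            mul_le_mul_of_nonneg_right (hcol F y) (sq_nonneg _)
      _ = (dm : ℝ) * ∑ y ∈ G, ‖g y‖ ^ 2 := by rw [Finset.mul_sum]
      _ ≤ (dm : ℝ) * ‖g‖ ^ 2 := by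
          refine mul_le_mul_of_nonneg_left ?_ (by positivity)
          have := lp.sum_rpow_le_norm_rpow hp2 g G
          rw [hrp _ (norm_nonneg _)] at this
          refine le_trans (le_of_eq ?_) this
          exact (Finset.sum_congr rfl fun y _ => (hrp _ (norm_nonneg _)).symm)
  -- total bound on finite partial sums
  have hsum : ∀ (g : lp (fun _ : X => ℂ) 2) (F : Finset X),
      ∑ x ∈ F, ‖T g x‖ ^ 2 ≤ ((dm : ℝ) * dn * s ^ 2) * ‖g‖ ^ 2 := by
    intro g F
    calc ∑ x ∈ F, ‖T g x‖ ^ 2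
        ≤ ∑ x ∈ F, (dn * s ^ 2) * ∑ y ∈ Tn x, ‖g y‖ ^ 2 :=
          Finset.sum_le_sum fun x _ => hpt g x
      _ = (dn * s ^ 2) * ∑ x ∈ F, ∑ y ∈ Tn x, ‖g y‖ ^ 2 := by rw [Finset.mul_sum]
      _ ≤ (dn * s ^ 2) * ((dm : ℝ) * ‖g‖ ^ 2) := by
          refine mul_le_mul_of_nonneg_left (hdouble g F) (by positivity)
      _ = ((dm : ℝ) * dn * s ^ 2) * ‖g‖ ^ 2 := by ring
  have hmem : ∀ g : lp (fun _ : X => ℂ) 2, Memℓp (T g) 2 := by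
    intro g
    refine memℓp_gen' (C := ((dm : ℝ) * dn * s ^ 2) * ‖g‖ ^ 2) (fun F => ?_)
    refine le_trans (le_of_eq (Finset.sum_congr rfl fun x _ => hrp _ (norm_nonneg _))) (hsum g F)
  set C : ℝ := ((max dm dn : ℕ) : ℝ) * s with hCdef
  have hC0 : 0 ≤ C := mul_nonneg (Nat.cast_nonneg _) hs0
  have hdd : (dm : ℝ) * dn * s ^ 2 ≤ C ^ 2 := by
    have h1 : (dm : ℝ) ≤ ((max dm dn : ℕ) : ℝ) := by exact_mod_cast Nat.le_max_left dm dn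
    have h2 : (dn : ℝ) ≤ ((max dm dn : ℕ) : ℝ) := by exact_mod_cast Nat.le_max_right dm dn
    have h3 : (0:ℝ) ≤ dm := Nat.cast_nonneg _
    have h4 : (0:ℝ) ≤ dn := Nat.cast_nonneg _
    have h5 : (0:ℝ) ≤ s^2 := sq_nonneg _
    calc (dm : ℝ) * dn * s ^ 2 ≤ ((max dm dn : ℕ) : ℝ) * ((max dm dn : ℕ) : ℝ) * s ^ 2 := by
          refine mul_le_mul_of_nonneg_right ?_ h5
          exact mul_le_mul h1 h2 h4 (Nat.cast_nonneg _)
      _ = C ^ 2 := by rw [hCdef]; ring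
  have hnormle : ∀ (g : lp (fun _ : X => ℂ) 2),
      ‖(⟨T g, hmem g⟩ : lp (fun _ : X => ℂ) 2)‖ ≤ C * ‖g‖ := by
    intro g
    refine lp.norm_le_of_forall_sum_le hp2 (mul_nonneg hC0 (norm_nonneg _)) (fun F => ?_)
    have : ∑ x ∈ F, ‖T g x‖ ^ (2:ℝ≥0∞).toReal = ∑ x ∈ F, ‖T g x‖ ^ 2 :=
      Finset.sum_congr rfl fun x _ => hrp _ (norm_nonneg _)
    rw [this, hrp _ (mul_nonneg hC0 (norm_nonneg _))]
    refine (hsum g F).trans ?_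
    have : C ^ 2 * ‖g‖ ^ 2 = (C * ‖g‖) ^ 2 := by ring
    rw [← this]
    exact mul_le_mul_of_nonneg_right hdd (sq_nonneg _)
  set L : lp (fun _ : X => ℂ) 2 →ₗ[ℂ] lp (fun _ : X => ℂ) 2 :=
    { toFun := fun g => ⟨T g, hmem g⟩
      map_add' := by
        intro g h
        apply lp.ext
        rw [lp.coeFn_add]
        funext x
        change T (g + h) x = T g x + T h x
        simp only [hT]
        rw [← Finset.sum_add_distrib]
        refine Finset.sum_congr rfl fun y _ => ?_
        rw [show (↑(g + h) : X → ℂ) = ↑g + ↑h from lp.coeFn_add g h]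
        simp [mul_add]
      map_smul' := by
        intro c g
        apply lp.ext
        rw [lp.coeFn_smul]
        funext x
        change T (c • g) x = c • T g x
        simp only [hT, smul_eq_mul, Finset.mul_sum]
        refine Finset.sum_congr rfl fun y _ => ?_
        rw [show (↑(c • g) : X → ℂ) = c • ↑g from lp.coeFn_smul c g]
        simp [smul_eq_mul]
        ring } with hL
  set α := L.mkContinuous C hnormle with hα
  have hαapp : ∀ g, (↑(α g) : X → ℂ) = T g := fun g => rfl
  -- entry computation
  have hent : ∀ γ : lp (fun _ : X => ℂ) 2 →L[ℂ] lp (fun _ : X => ℂ) 2,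
      ∀ x y : X, entry γ x y = (↑(γ (basisVec y)) : X → ℂ) x := by
    intro γ x y
    rw [entry, basisVec, lp.inner_single_left, RCLike.inner_apply, map_one, mul_one]
  have hentα : ∀ x y : X, entry α x y = if R^[m] x = R^[n] y then f (x, y) else 0 := by
    intro x y
    rw [hent, hαapp]
    have hbv : ∀ (j : X), (basisVec y : X → ℂ) j = if j = y then 1 else 0 := by
      intro j
      rw [basisVec, lp.single_apply]
      by_cases h : j = y
      · subst h; simp
      · simp [h]
    have : T (basisVec y) x = ∑ y' ∈ Tn x, k x y' * (if y' = y then 1 else 0) := by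
      refine Finset.sum_congr rfl fun y' _ => ?_
      rw [hbv]
    rw [this]
    simp only [mul_ite, mul_one, mul_zero]
    rw [Finset.sum_ite_eq' (Tn x) y (fun y' => k x y')]
    by_cases hy : y ∈ Tn x
    · rw [if_pos hy]
    · rw [if_neg hy]
      exact (if_neg fun hc => hy ((hTnmem x y).2 hc.symm)).symm
  refine ⟨α, hentα, ?_, ?_, ?_⟩
  · -- uniqueness
    intro β hβ
    have hbasis : ∀ y : X, β (basisVec y) = α (basisVec y) := by
      intro y
      apply lp.ext
      funext x
      have h1 := (hent β x y).symm
      have h2 := (hent α x y).symm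
      rw [hβ x y] at h1
      rw [hentα x y] at h2
      exact h1.trans h2.symm
    have hsing : ∀ (i : X) (c : ℂ), β (lp.single 2 i c) = α (lp.single 2 i c) := by
      intro i c
      have : lp.single 2 i c = c • basisVec i := by
        rw [basisVec, ← lp.single_smul, smul_eq_mul, mul_one]
      rw [this, map_smul, map_smul, hbasis]
    refine ContinuousLinearMap.ext fun g => ?_
    have hg := lp.hasSum_single (E := fun _ : X => ℂ) (p := 2) (by norm_num) g
    have h1 : HasSum (fun i => β (lp.single 2 i (g i))) (β g) := hg.mapL β
    have h2 : HasSum (fun i => α (lp.single 2 i (g i))) (α g) := hg.mapL α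
    have heq : (fun i => β (lp.single 2 i (g i))) = (fun i => α (lp.single 2 i (g i))) :=
      funext fun i => hsing i (g i)
    rw [heq] at h1
    exact h1.unique h2
  · -- lower bound
    have hb1 : ∀ x : X, ‖basisVec x‖ = 1 := by
      intro x
      rw [basisVec]
      have := lp.norm_single (E := fun _ : X => ℂ) (p := 2) (by norm_num) x (1:ℂ)
      simpa using this
    refine Real.sSup_le ?_ (norm_nonneg _)
    rintro r ⟨p, hp, rfl⟩
    have h1 : ‖f p‖ = ‖entry α p.1 p.2‖ := by rw [hentα, if_pos hp]
    rw [h1, entry]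
    refine (norm_inner_le_norm _ _).trans ?_
    rw [hb1, one_mul]
    refine (α.le_opNorm _).trans ?_
    rw [hb1, mul_one]
  · -- upper bound
    exact L.mkContinuous_norm_le hC0 hnormle
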